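/- arXiv:0810.0026 — 4 statements merged into one kernel-verified Lean document; each statement's English description precedes it below -/
import Mathlib

section
/- Let H be a family of pairwise independent hash functions h : {0,1}^n → {0,1}^k, let S ⊆ {0,1}^n with |S| ≤ 2^{k−1}, and let V ⊆ S. Then the probability over a uniformly random h ∈ H that S ∩ h^{-1}(0^k) contains exactly one element and that this element lies in V is at least |V| / 2^{k+1}. -/
/-- Valiant–Vazirani hashing lemma: let `f : H → ({0,1}^n → {0,1}^k)` be a
pairwise independent family of hash functions (uniform h ∈ H), let S ⊆ {0,1}^n with
|S| ≤ 2^{k−1} and V ⊆ S. Then the probability over uniform h that S ∩ h⁻¹(0^k) consists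
of exactly one element lying in V is at least |V| / 2^{k+1}. -/
theorem hashing_unique_preimage_prob
    {H : Type*} [Fintype H] [Nonempty H] {n k : ℕ}
    (f : H → (Fin n → Bool) → (Fin k → Bool))
    (h1 : ∀ (x : Fin n → Bool) (a : Fin k → Bool),
      (Nat.card {h : H // f h x = a} : ℝ) / Fintype.card H = 1 / 2 ^ k)
    (h2 : ∀ (x y : Fin n → Bool) (a b : Fin k → Bool), x ≠ y →
      (Nat.card {h : H // f h x = a ∧ f h y = b} : ℝ) / Fintype.card H =
        (1 / 2 ^ k) * (1 / 2 ^ k))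
    (S V : Finset (Fin n → Bool)) (hVS : V ⊆ S)
    (hS : (S.card : ℝ) ≤ 2 ^ k / 2) :
    (V.card : ℝ) / 2 ^ (k + 1) ≤
      (Nat.card {h : H // ∃ x ∈ V,
          S.filter (fun y => f h y = fun _ => false) = {x}} : ℝ) / Fintype.card H := by
  classical
  have hN : (0:ℝ) < Fintype.card H := by exact_mod_cast Fintype.card_pos
  set z : Fin k → Bool := (fun _ => false) with hz
  set E : (Fin n → Bool) → Finset H :=
    fun x => Finset.univ.filter (fun h => S.filter (fun y => f h y = z) = {x}) with hE
  -- Step 1: the target Nat.card equals the card of a disjoint union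
  have hcard : Nat.card {h : H // ∃ x ∈ V,
      S.filter (fun y => f h y = fun _ => false) = {x}} = (V.biUnion E).card := by
    rw [Nat.card_eq_fintype_card, Fintype.card_subtype]
    congr 1
    ext h
    simp only [Finset.mem_filter, Finset.mem_univ, true_and, Finset.mem_biUnion, hE, hz]
  have hdisj : (V : Set (Fin n → Bool)).PairwiseDisjoint E := by
    intro x _ y _ hxy
    simp only [Finset.disjoint_left, hE]
    intro h hx hy
    simp only [Finset.mem_filter] at hx hy
    exact hxy (Finset.singleton_injective (hx.2.symm.trans hy.2))
  have hsum : ((V.biUnion E).card : ℝ) = ∑ x ∈ V, ((E x).card : ℝ) := by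
    rw [Finset.card_biUnion (fun x hx y hy hxy => hdisj hx hy hxy)]
    push_cast; ring
  -- Step 2: per-element lower bound
  have key : ∀ x ∈ V, (1:ℝ) / 2 ^ (k+1) ≤ ((E x).card : ℝ) / Fintype.card H := by
    intro x hxV
    have hxS : x ∈ S := hVS hxV
    set A : Finset H := Finset.univ.filter (fun h => f h x = z) with hA
    set B : (Fin n → Bool) → Finset H :=
      fun y => Finset.univ.filter (fun h => f h x = z ∧ f h y = z) with hB
    have hAcard : (A.card : ℝ) / Fintype.card H = 1 / 2 ^ k := by
      rw [← h1 x z]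
      congr 2
      rw [Nat.card_eq_fintype_card, Fintype.card_subtype]
    have hBcard : ∀ y ∈ S.erase x, ((B y).card : ℝ) / Fintype.card H
        = (1 / 2 ^ k) * (1 / 2 ^ k) := by
      intro y hy
      have hxy : x ≠ y := (Finset.ne_of_mem_erase hy).symm
      rw [← h2 x y z z hxy]
      congr 2
      rw [Nat.card_eq_fintype_card, Fintype.card_subtype]
    -- inclusion A ⊆ E x ∪ biUnion of B
    have hincl : A ⊆ E x ∪ (S.erase x).biUnion B := by
      intro h hh
      simp only [hA, Finset.mem_filter, Finset.mem_univ, true_and] at hh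
      by_cases hEx : S.filter (fun y => f h y = z) = {x}
      · exact Finset.mem_union_left _ (by simp [hE, hEx])
      · have hxf : x ∈ S.filter (fun y => f h y = z) := by
          simp [Finset.mem_filter, hxS, hh]
        obtain ⟨y, hyf, hyx⟩ : ∃ y ∈ S.filter (fun y => f h y = z), y ≠ x := by
          by_contra hcon
          push_neg at hcon
          exact hEx (Finset.eq_singleton_iff_unique_mem.mpr ⟨hxf, hcon⟩)
        simp only [Finset.mem_filter] at hyf
        refine Finset.mem_union_right _ (Finset.mem_biUnion.mpr ⟨y, ?_, ?_⟩)
        · exact Finset.mem_erase.mpr ⟨hyx, hyf.1⟩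
        · simp [hB, hh, hyf.2]
    have hcards : (A.card : ℝ) ≤ (E x).card + ∑ y ∈ S.erase x, ((B y).card : ℝ) := by
      have h1' : A.card ≤ ((E x) ∪ (S.erase x).biUnion B).card :=
        Finset.card_le_card hincl
      have h2' : ((E x) ∪ (S.erase x).biUnion B).card ≤
          (E x).card + ((S.erase x).biUnion B).card := Finset.card_union_le _ _
      have h3' : ((S.erase x).biUnion B).card ≤ ∑ y ∈ S.erase x, (B y).card :=
        Finset.card_biUnion_le
      have := (h1'.trans h2').trans (Nat.add_le_add_left h3' _)
      exact_mod_cast this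
    -- divide by N
    have hdiv : (A.card : ℝ) / Fintype.card H ≤
        ((E x).card : ℝ) / Fintype.card H +
          ∑ y ∈ S.erase x, ((B y).card : ℝ) / Fintype.card H := by
      rw [← Finset.sum_div, ← add_div]
      exact div_le_div_of_nonneg_right hcards hN.le
    rw [hAcard] at hdiv
    have hBsum : ∑ y ∈ S.erase x, ((B y).card : ℝ) / Fintype.card H
        = ((S.erase x).card : ℝ) * ((1 / 2 ^ k) * (1 / 2 ^ k)) := by
      rw [Finset.sum_congr rfl hBcard, Finset.sum_const, nsmul_eq_mul]
    rw [hBsum] at hdiv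
    have herase : ((S.erase x).card : ℝ) ≤ 2 ^ k / 2 := by
      have : (S.erase x).card ≤ S.card := Finset.card_le_card (Finset.erase_subset _ _)
      calc ((S.erase x).card : ℝ) ≤ S.card := by exact_mod_cast this
        _ ≤ 2 ^ k / 2 := hS
    have hpk : (0:ℝ) < 2 ^ k := by positivity
    have : (1:ℝ) / 2 ^ k - 2 ^ k / 2 * ((1 / 2 ^ k) * (1 / 2 ^ k)) ≤
        ((E x).card : ℝ) / Fintype.card H := by
      have hmul : ((S.erase x).card : ℝ) * ((1 / 2 ^ k) * (1 / 2 ^ k)) ≤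
          2 ^ k / 2 * ((1 / 2 ^ k) * (1 / 2 ^ k)) := by
        apply mul_le_mul_of_nonneg_right herase
        positivity
      linarith
    calc (1:ℝ) / 2 ^ (k+1) = 1 / 2 ^ k - 2 ^ k / 2 * ((1 / 2 ^ k) * (1 / 2 ^ k)) := by
          field_simp
          ring
      _ ≤ _ := this
  -- Step 3: sum up
  rw [hcard, hsum, Finset.sum_div]
  calc (V.card : ℝ) / 2 ^ (k+1) = ∑ _x ∈ V, (1:ℝ) / 2 ^ (k+1) := by
        rw [Finset.sum_const, nsmul_eq_mul]; ring
    _ ≤ ∑ x ∈ V, ((E x).card : ℝ) / Fintype.card H := Finset.sum_le_sum key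
end

section
/- Let S be the set of separable states on a finite-dimensional multipartite Hilbert space, R_G(ρ) := min { s ≥ 0 : ∃ state π with (ρ + sπ)/(1+s) ∈ S } the global robustness, and LR_G(ρ) := log₂(1 + R_G(ρ)). If Λ is a completely positive trace-preserving map such that R_G(Λ(σ)) ≤ ε for every σ ∈ S, then for every state ρ, LR_G(Λ(ρ)) ≤ log₂(1 + ε) + LR_G(ρ). -/
open Matrix ComplexOrder

/-- A quantum state: a positive semidefinite operator of unit trace. -/
def IsState {n : Type*} [Fintype n] [DecidableEq n] (ρ : Matrix n n ℂ) : Prop :=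
  ρ.PosSemidef ∧ ρ.trace = 1

/-- The tensor product of m single-party operators, as an operator on the
multipartite Hilbert space. -/
def prodMat {m : ℕ} {d : Fin m → ℕ} (σ : ∀ i, Matrix (Fin (d i)) (Fin (d i)) ℂ) :
    Matrix (∀ i, Fin (d i)) (∀ i, Fin (d i)) ℂ :=
  Matrix.of fun x y => ∏ i, σ i (x i) (y i)

/-- Fully separable states on the multipartite space: convex combinations of
product states. -/
def IsSepState {m : ℕ} {d : Fin m → ℕ}
    (ρ : Matrix (∀ i, Fin (d i)) (∀ i, Fin (d i)) ℂ) : Prop :=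
  ∃ (N : ℕ) (p : Fin N → ℝ) (σ : Fin N → ∀ i, Matrix (Fin (d i)) (Fin (d i)) ℂ),
    (∀ j, 0 ≤ p j) ∧ (∑ j, p j = 1) ∧
    (∀ j i, (σ j i).PosSemidef ∧ (σ j i).trace = 1) ∧
    ρ = ∑ j, (p j : ℂ) • prodMat (σ j)

/-- The global robustness of entanglement:
R_G(ρ) = min { s ≥ 0 : ∃ state π with (ρ + sπ)/(1+s) separable }. -/
noncomputable def RG {m : ℕ} {d : Fin m → ℕ}
    (ρ : Matrix (∀ i, Fin (d i)) (∀ i, Fin (d i)) ℂ) : ℝ :=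
  sInf { s : ℝ | 0 ≤ s ∧ ∃ π, IsState π ∧ IsSepState ((1 + s)⁻¹ • (ρ + s • π)) }

/-- A completely positive (Kraus form) trace-preserving map. -/
def IsCPTP {n : Type*} [Fintype n] [DecidableEq n]
    (Λ : Matrix n n ℂ →ₗ[ℂ] Matrix n n ℂ) : Prop :=
  (∃ (N : ℕ) (K : Fin N → Matrix n n ℂ), ∀ X, Λ X = ∑ i, K i * X * (K i)ᴴ) ∧
    (∀ X, (Λ X).trace = X.trace)


section Aux

variable {n : Type*} [Fintype n] [DecidableEq n]

variable {n : Type*} [Fintype n] [DecidableEq n]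

lemma psd_smul {M : Matrix n n ℂ} (hM : M.PosSemidef) {r : ℝ} (hr : 0 ≤ r) :
    (r • M).PosSemidef := by
  rw [RCLike.real_smul_eq_coe_smul (K := ℂ)]
  constructor
  · rw [IsHermitian, conjTranspose_smul, hM.1.eq]
    congr 1
    simp [Complex.ext_iff]
  · intro x
    exact (hM.smul (Complex.zero_le_real.mpr hr)).2 x

lemma psd_trace_one_le_one {M : Matrix n n ℂ} (hM : M.PosSemidef) (htr : M.trace = 1)
    {c : ℝ} (hc : 1 ≤ c) : (c • (1 : Matrix n n ℂ) - M).PosSemidef := by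
  have hH := hM.1
  have hspec := hH.spectral_theorem
  set U : Matrix n n ℂ := (Matrix.IsHermitian.eigenvectorUnitary hH : Matrix n n ℂ) with hU
  have hUU : U * star U = 1 := (Matrix.mem_unitaryGroup_iff).mp
    (Matrix.IsHermitian.eigenvectorUnitary hH).2
  have hU'U : star U * U = 1 := (Matrix.mem_unitaryGroup_iff').mp
    (Matrix.IsHermitian.eigenvectorUnitary hH).2
  have hsum : ∑ i, hH.eigenvalues i = 1 := by
    have : M.trace = ∑ i, (hH.eigenvalues i : ℂ) := by
      conv_lhs => rw [hspec, Unitary.conjStarAlgAut_apply]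
      rw [Matrix.trace_mul_cycle, hU'U, one_mul]
      simp [Matrix.trace_diagonal]
    rw [htr] at this
    exact_mod_cast this.symm
  have hev : ∀ i, hH.eigenvalues i ≤ 1 := by
    intro i
    rw [← hsum]
    exact Finset.single_le_sum (f := hH.eigenvalues)
      (fun j _ => hM.eigenvalues_nonneg j) (Finset.mem_univ i)
  have key : c • (1 : Matrix n n ℂ) - M
      = U * Matrix.diagonal (fun i => ((c - hH.eigenvalues i : ℝ) : ℂ)) * star U := by
    have h1 : c • (1 : Matrix n n ℂ) = U * (c • 1) * star U := by
      rw [mul_smul_comm, smul_mul_assoc, mul_one, hUU]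
    conv_lhs => rw [h1, hspec, Unitary.conjStarAlgAut_apply]
    rw [← sub_mul, ← mul_sub]
    congr 2
    ext i j
    rcases eq_or_ne i j with h | h
    · subst h
      simp only [Matrix.sub_apply, Matrix.smul_apply, Matrix.one_apply_eq,
        Matrix.diagonal_apply_eq, Function.comp_apply, Complex.real_smul, mul_one]
      push_cast
      norm_num [RCLike.ofReal]
    · simp [Matrix.diagonal_apply_ne _ h, Matrix.one_apply_ne h]
  rw [key]
  exact Matrix.PosSemidef.mul_mul_conjTranspose_same
    (Matrix.posSemidef_diagonal_iff.mpr fun i => by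
      rw [Complex.zero_le_real]; linarith [hev i]) U

lemma cptp_state {Λ : Matrix n n ℂ →ₗ[ℂ] Matrix n n ℂ} (hΛ : IsCPTP Λ)
    {ρ : Matrix n n ℂ} (hρ : IsState ρ) : IsState (Λ ρ) := by
  obtain ⟨⟨N, K, hK⟩, htr⟩ := hΛ
  refine ⟨?_, by rw [htr]; exact hρ.2⟩
  rw [hK]
  exact Finset.sum_induction _ _ (fun a b ha hb => ha.add hb) Matrix.PosSemidef.zero
    (fun i _ => hρ.1.mul_mul_conjTranspose_same (K i))

end Aux

section Aux2

variable {m : ℕ} {d : Fin m → ℕ}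

/-- The defining set of the robustness. -/
def RGset (ρ : Matrix (∀ i, Fin (d i)) (∀ i, Fin (d i)) ℂ) : Set ℝ :=
  { s : ℝ | 0 ≤ s ∧ ∃ π, IsState π ∧ IsSepState ((1 + s)⁻¹ • (ρ + s • π)) }

lemma RG_eq (ρ : Matrix (∀ i, Fin (d i)) (∀ i, Fin (d i)) ℂ) : RG ρ = sInf (RGset ρ) := rfl

lemma RGset_bddBelow (ρ : Matrix (∀ i, Fin (d i)) (∀ i, Fin (d i)) ℂ) :
    BddBelow (RGset ρ) := ⟨0, fun s hs => hs.1⟩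

lemma RG_le {ρ : Matrix (∀ i, Fin (d i)) (∀ i, Fin (d i)) ℂ} {s : ℝ} (hs : s ∈ RGset ρ) :
    RG ρ ≤ s := csInf_le (RGset_bddBelow ρ) hs

lemma RG_nonneg {ρ : Matrix (∀ i, Fin (d i)) (∀ i, Fin (d i)) ℂ}
    (h : (RGset ρ).Nonempty) : 0 ≤ RG ρ := le_csInf h fun s hs => hs.1

/-- The maximally mixed state is separable. -/
lemma sep_maxmixed (hd : ∀ i, 0 < d i) :
    IsSepState (((Fintype.card (∀ i, Fin (d i)) : ℝ))⁻¹ •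
      (1 : Matrix (∀ i, Fin (d i)) (∀ i, Fin (d i)) ℂ)) := by
  refine ⟨1, fun _ => 1, fun _ i => ((d i : ℝ))⁻¹ • 1, fun _ => zero_le_one, by simp,
    fun _ i => ⟨psd_smul Matrix.PosSemidef.one (by positivity), ?_⟩, ?_⟩
  · rw [Matrix.trace_smul, Matrix.trace_one]
    rw [show ((Fintype.card (Fin (d i)) : ℂ)) = ((d i : ℝ) : ℂ) by push_cast; simp]
    rw [Complex.real_smul, ← Complex.ofReal_mul,
      inv_mul_cancel₀ (by exact_mod_cast (hd i).ne' : (d i:ℝ) ≠ 0), Complex.ofReal_one]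
  · rw [Fin.sum_univ_one]
    simp only [Complex.ofReal_one, one_smul]
    ext x y
    simp only [prodMat, Matrix.of_apply, Matrix.smul_apply, Complex.real_smul, Matrix.one_apply,
      Fintype.card_pi, Fintype.card_fin]
    by_cases h : x = y
    · subst h
      simp only [if_pos rfl, mul_one]
      push_cast
      rw [Finset.prod_mul_distrib]
      simp [Finset.prod_inv_distrib]
    · obtain ⟨i0, hi0⟩ : ∃ i, x i ≠ y i := by
        by_contra hc; push_neg at hc; exact h (funext hc)
      rw [if_neg h, mul_zero]
      rw [Finset.prod_eq_zero (Finset.mem_univ i0)]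
      simp [if_neg hi0]

lemma RGset_nonempty {ρ : Matrix (∀ i, Fin (d i)) (∀ i, Fin (d i)) ℂ} (hρ : IsState ρ) :
    (RGset ρ).Nonempty := by
  have hne : Nonempty (∀ i, Fin (d i)) := by
    by_contra hc
    rw [not_nonempty_iff] at hc
    have : ρ.trace = 0 := by
      simp [Matrix.trace, Finset.univ_eq_empty]
    rw [hρ.2] at this
    exact one_ne_zero this
  have hd : ∀ i, 0 < d i := fun i => Fin.pos ((Classical.arbitrary (∀ i, Fin (d i))) i)
  obtain ⟨D, hD⟩ : ∃ D : ℕ, Fintype.card (∀ i, Fin (d i)) = D := ⟨_, rfl⟩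
  have hD0 : 0 < D := hD ▸ Fintype.card_pos
  have hDR : (0:ℝ) < (D:ℝ) := by exact_mod_cast hD0
  have hDne : (D:ℝ) ≠ 0 := hDR.ne'
  have h1D : (1:ℝ) + D ≠ 0 := by positivity
  refine ⟨(D:ℝ), by positivity,
    (D:ℝ)⁻¹ • (((1 + D : ℝ)/D) • (1 : Matrix _ _ ℂ) - ρ), ⟨⟨?_, ?_⟩, ?_⟩⟩
  · exact psd_smul (psd_trace_one_le_one hρ.1 hρ.2 (by rw [le_div_iff₀ hDR]; linarith)) (by positivity)
  · rw [Matrix.trace_smul, Matrix.trace_sub, Matrix.trace_smul, Matrix.trace_one, hρ.2, hD]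
    simp only [Complex.real_smul, nsmul_eq_mul]
    have h1DC : ((1:ℂ) + (D:ℂ)) ≠ 0 := by
      rw [show (1:ℂ) + (D:ℂ) = (((1:ℝ) + D : ℝ) : ℂ) by push_cast; ring]
      exact_mod_cast h1D
    have hDCne : ((D:ℂ)) ≠ 0 := Nat.cast_ne_zero.mpr hD0.ne'
    push_cast
    field_simp
    ring

  · have key : (1 + (D:ℝ))⁻¹ • (ρ + (D:ℝ) • ((D:ℝ)⁻¹ •
        (((1 + D : ℝ)/D) • (1 : Matrix (∀ i, Fin (d i)) (∀ i, Fin (d i)) ℂ) - ρ)))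
        = ((Fintype.card (∀ i, Fin (d i)) : ℝ))⁻¹ •
          (1 : Matrix (∀ i, Fin (d i)) (∀ i, Fin (d i)) ℂ) := by
      rw [hD]
      match_scalars <;> field_simp <;> ring
    rw [key]
    exact sep_maxmixed hd

end Aux2

/-- if Λ is a CPTP map with R_G(Λ(σ)) ≤ ε for every separable state σ, then
for every state ρ, LR_G(Λ(ρ)) ≤ log₂(1+ε) + LR_G(ρ), where LR_G = log₂(1 + R_G). -/
theorem logRobustness_increase_bound {m : ℕ} {d : Fin m → ℕ}
    (Λ : Matrix (∀ i, Fin (d i)) (∀ i, Fin (d i)) ℂ →ₗ[ℂ]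
         Matrix (∀ i, Fin (d i)) (∀ i, Fin (d i)) ℂ)
    (hΛ : IsCPTP Λ) (ε : ℝ) (hε : 0 ≤ ε)
    (hne : ∀ σ, IsState σ → IsSepState σ → RG (Λ σ) ≤ ε) :
    ∀ ρ, IsState ρ →
      Real.logb 2 (1 + RG (Λ ρ)) ≤ Real.logb 2 (1 + ε) + Real.logb 2 (1 + RG ρ) := by
  intro ρ hρ
  have hρS : (RGset ρ).Nonempty := RGset_nonempty hρ
  have hΛρ : IsState (Λ ρ) := cptp_state hΛ hρ
  have hTρ : (RGset (Λ ρ)).Nonempty := RGset_nonempty hΛρ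
  have hRG0 : 0 ≤ RG (Λ ρ) := RG_nonneg hTρ
  have hRGρ0 : 0 ≤ RG ρ := RG_nonneg hρS
  have h1ε : (0:ℝ) < 1 + ε := by linarith
  have main : 1 + RG (Λ ρ) ≤ (1 + ε) * (1 + RG ρ) := by
    have hstep : ∀ s ∈ RGset ρ, 1 + RG (Λ ρ) ≤ (1 + ε) * (1 + s) := by
      intro s hs
      obtain ⟨hs0, π, hπ, hsep⟩ := hs
      have h1s : (0:ℝ) < 1 + s := by linarith
      set σ := (1 + s)⁻¹ • (ρ + s • π) with hσdef
      have hσstate : IsState σ := by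
        constructor
        · exact psd_smul (hρ.1.add (psd_smul hπ.1 hs0)) (by positivity)
        · rw [hσdef, Matrix.trace_smul, Matrix.trace_add, Matrix.trace_smul, hρ.2, hπ.2]
          simp only [Complex.real_smul, mul_one]
          rw [show ((1:ℂ) + (s:ℝ)) = (((1 + s : ℝ)):ℂ) by push_cast; ring]
          rw [← Complex.ofReal_mul, inv_mul_cancel₀ h1s.ne', Complex.ofReal_one]
      have hρeq : ρ = (1 + s) • σ - s • π := by
        rw [hσdef, smul_inv_smul₀ h1s.ne']
        abel
      have hΛσstate : IsState (Λ σ) := cptp_state hΛ hσstate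
      have hTσ : (RGset (Λ σ)).Nonempty := RGset_nonempty hΛσstate
      have hΛπ : IsState (Λ π) := cptp_state hΛ hπ
      have hΛρeq : Λ ρ = (1 + s) • Λ σ - s • Λ π := by
        conv_lhs => rw [hρeq]
        rw [map_sub]
        simp only [LinearMap.map_smul_of_tower]
      have hmem : ∀ t ∈ RGset (Λ σ), (s + t + s*t) ∈ RGset (Λ ρ) := by
        intro t ht
        obtain ⟨ht0, τ, hτ, hsep'⟩ := ht
        have h1t : (0:ℝ) < 1 + t := by linarith
        have hs'0 : 0 ≤ s + t + s*t := by positivity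
        rcases eq_or_lt_of_le hs'0 with heq | hpos
        · have hs0' : s = 0 := by nlinarith
          have ht0' : t = 0 := by nlinarith
          refine ⟨hs'0, τ, hτ, ?_⟩
          have hE : (1 + (s + t + s*t))⁻¹ • (Λ ρ + (s + t + s*t) • τ)
              = (1 + t)⁻¹ • (Λ σ + t • τ) := by
            rw [hΛρeq, hs0', ht0']
            simp
          rw [hE]
          exact hsep'
        · set s' := s + t + s*t with hs'def
          have hs'ne : s' ≠ 0 := hpos.ne'
          have h1s' : (0:ℝ) < 1 + s' := by linarith
          refine ⟨hs'0, (s'⁻¹ * s) • Λ π + (s'⁻¹ * (t*(1+s))) • τ, ⟨?_, ?_⟩, ?_⟩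
          · exact (psd_smul hΛπ.1 (mul_nonneg (inv_nonneg.mpr hpos.le) hs0)).add
              (psd_smul hτ.1 (mul_nonneg (inv_nonneg.mpr hpos.le) (by positivity)))
          · rw [Matrix.trace_add, Matrix.trace_smul, Matrix.trace_smul, hΛπ.2, hτ.2]
            simp only [Complex.real_smul, mul_one]
            rw [← Complex.ofReal_add, show (1:ℂ) = ((1:ℝ):ℂ) from rfl, Complex.ofReal_inj]
            field_simp
            rw [hs'def]
            ring
          · have hE : (1 + s')⁻¹ • (Λ ρ + s' • ((s'⁻¹ * s) • Λ π + (s'⁻¹ * (t*(1+s))) • τ))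
                = (1 + t)⁻¹ • (Λ σ + t • τ) := by
              rw [hΛρeq]
              have hexp : 1 + s' = (1+s)*(1+t) := by rw [hs'def]; ring
              match_scalars <;> rw [hexp] <;> field_simp <;> ring_nf
            rw [hE]
            exact hsep'
      have hle : (RG (Λ ρ) - s) / (1 + s) ≤ RG (Λ σ) := by
        rw [RG_eq (Λ σ)]
        apply le_csInf hTσ
        intro t ht
        have h2 := RG_le (hmem t ht)
        rw [div_le_iff₀ h1s]
        nlinarith
      have hεσ : RG (Λ σ) ≤ ε := hne σ hσstate hsep
      have h3 : (RG (Λ ρ) - s)/(1+s) ≤ ε := le_trans hle hεσ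
      rw [div_le_iff₀ h1s] at h3
      nlinarith
    have hdiv : (1 + RG (Λ ρ)) / (1 + ε) - 1 ≤ RG ρ := by
      rw [RG_eq ρ]
      apply le_csInf hρS
      intro s hs
      have h2 := hstep s hs
      rw [sub_le_iff_le_add, div_le_iff₀ h1ε]
      nlinarith
    have h4 : (1 + RG (Λ ρ))/(1+ε) ≤ 1 + RG ρ := by linarith
    calc 1 + RG (Λ ρ) = ((1 + RG (Λ ρ))/(1+ε)) * (1+ε) := by field_simp
      _ ≤ (1 + RG ρ) * (1+ε) := mul_le_mul_of_nonneg_right h4 h1ε.le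
      _ = (1+ε)*(1+RG ρ) := mul_comm _ _
  have h1 : (0:ℝ) < 1 + RG (Λ ρ) := by linarith
  have h3 : (0:ℝ) < 1 + RG ρ := by linarith
  calc Real.logb 2 (1 + RG (Λ ρ)) ≤ Real.logb 2 ((1+ε)*(1+RG ρ)) :=
        Real.logb_le_logb_of_le one_lt_two h1 main
    _ = _ := Real.logb_mul h1ε.ne' h3.ne'
end

section
/- For closed convex cones A and B in a finite-dimensional real inner product space, the dual cone of their intersection equals the closure of the sum of their dual cones: (A ∩ B)* = cl(A* + B*). -/
open Pointwise

section Aux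

variable {H : Type*} [NormedAddCommGroup H] [InnerProductSpace ℝ H]

open scoped InnerProductSpace

lemma innerDualCone_closure_aux [CompleteSpace H] (s : Set H) :
    ProperCone.innerDual (closure s) = ProperCone.innerDual s := by
  apply le_antisymm
  · exact ProperCone.innerDual_le_innerDual subset_closure
  · intro y hy x hx
    have hcont : Continuous fun x : H => ⟪x, y⟫_ℝ :=
      continuous_id.inner continuous_const
    have : closure s ⊆ {x : H | 0 ≤ ⟪x, y⟫_ℝ} :=
      closure_minimal (fun z hz => hy hz) (isClosed_le continuous_const hcont)
    exact this hx

lemma innerDualCone_add_aux [CompleteSpace H] (s t : Set H) (hs : (0:H) ∈ s) (ht : (0:H) ∈ t) :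
    ProperCone.innerDual (s + t : Set H) = ProperCone.innerDual s ⊓ ProperCone.innerDual t := by
  apply le_antisymm
  · intro y hy
    constructor
    · intro x hx
      have := hy (x := x + 0) ⟨x, hx, 0, ht, rfl⟩
      simpa using this
    · intro x hx
      have := hy (x := 0 + x) ⟨0, hs, x, hx, rfl⟩
      simpa using this
  · rintro y ⟨hy1, hy2⟩ x ⟨a, ha, b, hb, rfl⟩
    simp only [innerₗ_apply_apply]
    rw [inner_add_left]
    exact add_nonneg (hy1 ha) (hy2 hb)

lemma innerDual_innerDual_aux [CompleteSpace H] (C : ConvexCone ℝ H)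
    (hne : (C : Set H).Nonempty) (hcl : IsClosed (C : Set H)) :
    (ProperCone.innerDual (ProperCone.innerDual (C : Set H) : Set H) : Set H) = C := by
  lift C to ProperCone ℝ H using ⟨hne, hcl⟩
  exact congrArg SetLike.coe (ProperCone.innerDual_innerDual C)

end Aux

/-- for closed convex cones A, B in a finite-dimensional real inner product
space, the dual cone of their intersection equals the closure of the sum of their dual
cones: (A ∩ B)* = cl(A* + B*). -/
theorem innerDualCone_inter_eq_closure_add {n : ℕ}
    (A B : ConvexCone ℝ (EuclideanSpace ℝ (Fin n)))
    (hA : IsClosed (A : Set (EuclideanSpace ℝ (Fin n))))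
    (hB : IsClosed (B : Set (EuclideanSpace ℝ (Fin n)))) :
    ((ProperCone.innerDual ((A : Set (EuclideanSpace ℝ (Fin n))) ∩
        (B : Set (EuclideanSpace ℝ (Fin n))))) :
      Set (EuclideanSpace ℝ (Fin n))) =
    closure
      ((ProperCone.innerDual (A : Set (EuclideanSpace ℝ (Fin n))) :
          Set (EuclideanSpace ℝ (Fin n))) +
        (ProperCone.innerDual (B : Set (EuclideanSpace ℝ (Fin n))) :
          Set (EuclideanSpace ℝ (Fin n)))) := by
  set E := EuclideanSpace ℝ (Fin n)
  -- 0 is in every dual cone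
  have h0A : (0:E) ∈ (ProperCone.innerDual (A:Set E) : Set E) :=
    (zero_mem _ : _)
  have h0B : (0:E) ∈ (ProperCone.innerDual (B:Set E) : Set E) :=
    (zero_mem _ : _)
  rcases (A:Set E).eq_empty_or_nonempty with hAe | hAne
  · -- A empty
    have hdual : ProperCone.innerDual (A:Set E) = ⊤ := by rw [hAe]; exact ProperCone.innerDual_empty
    have hsum : (ProperCone.innerDual (A:Set E) : Set E) + (ProperCone.innerDual (B:Set E) : Set E)
        = Set.univ := by
      apply Set.eq_univ_of_forall
      intro x
      exact ⟨x - 0, by simp [hdual], 0, h0B, by simp⟩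
    rw [hsum, closure_univ, hAe, Set.empty_inter, ProperCone.innerDual_empty]
    rfl
  rcases (B:Set E).eq_empty_or_nonempty with hBe | hBne
  · have hdual : ProperCone.innerDual (B:Set E) = ⊤ := by rw [hBe]; exact ProperCone.innerDual_empty
    have hsum : (ProperCone.innerDual (A:Set E) : Set E) + (ProperCone.innerDual (B:Set E) : Set E)
        = Set.univ := by
      apply Set.eq_univ_of_forall
      intro x
      exact ⟨0, h0A, x - 0, by simp [hdual], by simp⟩
    rw [hsum, closure_univ, hBe, Set.inter_empty, ProperCone.innerDual_empty]
    rfl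
  -- main case
  have h0A' : (0:E) ∈ (A:Set E) := ConvexCone.Pointed.of_nonempty_of_isClosed hAne hA
  have h0B' : (0:E) ∈ (B:Set E) := ConvexCone.Pointed.of_nonempty_of_isClosed hBne hB
  set K : ConvexCone ℝ E := (((ProperCone.innerDual (A:Set E)).toPointedCone : ConvexCone ℝ E)
    + ((ProperCone.innerDual (B:Set E)).toPointedCone : ConvexCone ℝ E)).closure
    with hKdef
  have hKcoe : (K : Set E) = closure ((ProperCone.innerDual (A:Set E) : Set E)
      + (ProperCone.innerDual (B:Set E) : Set E)) := by
    rw [hKdef, ConvexCone.coe_closure]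
    congr 1
  have hKne : (K : Set E).Nonempty := by
    refine ⟨0, ?_⟩
    rw [hKcoe]
    exact subset_closure ⟨0, h0A, 0, h0B, by simp⟩
  have hKcl : IsClosed (K : Set E) := by rw [hKcoe]; exact isClosed_closure
  -- dual of K equals A ∩ B
  have hAA : (ProperCone.innerDual (ProperCone.innerDual (A:Set E) : Set E) : Set E) = A :=
    innerDual_innerDual_aux A hAne hA
  have hBB : (ProperCone.innerDual (ProperCone.innerDual (B:Set E) : Set E) : Set E) = B :=
    innerDual_innerDual_aux B hBne hB
  have hKdual : (ProperCone.innerDual (K : Set E) : Set E) = (A:Set E) ∩ (B:Set E) := by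
    rw [hKcoe, innerDualCone_closure_aux, innerDualCone_add_aux _ _ h0A h0B]
    have : ((ProperCone.innerDual (ProperCone.innerDual (A:Set E) : Set E)
        ⊓ ProperCone.innerDual (ProperCone.innerDual (B:Set E) : Set E) : ProperCone ℝ E) : Set E)
        = (ProperCone.innerDual (ProperCone.innerDual (A:Set E) : Set E) : Set E)
          ∩ (ProperCone.innerDual (ProperCone.innerDual (B:Set E) : Set E) : Set E) := rfl
    rw [this, hAA, hBB]
  have hKK := innerDual_innerDual_aux K hKne hKcl
  calc (ProperCone.innerDual ((A:Set E) ∩ (B:Set E)) : Set E)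
      = (ProperCone.innerDual (ProperCone.innerDual (K : Set E) : Set E) : Set E) := by
        rw [hKdual]
    _ = (K : Set E) := by rw [hKK]
    _ = _ := hKcoe
end

section
/- Let P be a probability distribution on a finite set X and let x = (x_1,...,x_n) be drawn i.i.d. from P. Let λ_x denote the empirical (type) distribution of x. Then for any δ > 0, Pr[ ‖λ_x − P‖₁ > δ ] ≤ 2^{ −n ( δ²/(2 ln 2) − |X| · log₂(n+1)/n ) }. -/
open Real


lemma bern_mgf {p : ℝ} (hp0 : 0 ≤ p) (hp1 : p ≤ 1) {t : ℝ} (ht : 0 ≤ t) :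
    p * Real.exp t + (1 - p) ≤ Real.exp (t * p + t ^ 2 / 8) := by
  set s : ℝ → ℝ := fun u => p * Real.exp u + (1 - p) with hs_def
  have hs : ∀ u, 0 < s u := by
    intro u
    rcases eq_or_lt_of_le hp0 with h | h
    · simp [hs_def, ← h]
    · have := Real.exp_pos u
      simp only [hs_def]
      nlinarith
  have hsd : ∀ u, HasDerivAt s (p * Real.exp u) u := fun u =>
    ((Real.hasDerivAt_exp u).const_mul p).add_const (1 - p)
  set g : ℝ → ℝ := fun u => u * p + u ^ 2 / 8 - Real.log (s u) with hg_def
  set g₁ : ℝ → ℝ := fun u => p + u / 4 - p * Real.exp u / s u with hg1_def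
  have hgd : ∀ u, HasDerivAt g (g₁ u) u := by
    intro u
    have h1 : HasDerivAt (fun u : ℝ => u * p) p u := by
      simpa using (hasDerivAt_id u).mul_const p
    have h2 : HasDerivAt (fun u : ℝ => u ^ 2 / 8) (u / 4) u := by
      have := (hasDerivAt_pow 2 u).div_const 8
      exact this.congr_deriv (by push_cast; ring)
    have h3 : HasDerivAt (fun u => Real.log (s u)) (p * Real.exp u / s u) u :=
      (hsd u).log (hs u).ne'
    exact (h1.add h2).sub h3
  have hg1d : ∀ u, HasDerivAt g₁
      (1 / 4 - (p * Real.exp u * s u - p * Real.exp u * (p * Real.exp u)) / (s u) ^ 2) u := by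
    intro u
    have hq : HasDerivAt (fun u => p * Real.exp u / s u)
        ((p * Real.exp u * s u - p * Real.exp u * (p * Real.exp u)) / (s u) ^ 2) u :=
      ((Real.hasDerivAt_exp u).const_mul p).div (hsd u) (hs u).ne'
    have h2 : HasDerivAt (fun u : ℝ => p + u / 4) (1 / 4) u := by
      simpa using ((hasDerivAt_id u).div_const 4).const_add p
    exact (h2.sub hq).congr_deriv (by ring)
  have hg1mono : Monotone g₁ := by
    apply monotone_of_deriv_nonneg (fun u => (hg1d u).differentiableAt)
    intro u
    rw [(hg1d u).deriv]
    have hsu := hs u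
    have hd : (p * Real.exp u * s u - p * Real.exp u * (p * Real.exp u)) / (s u) ^ 2 ≤ 1 / 4 := by
      rw [div_le_iff₀ (by positivity)]
      have hkey : s u = p * Real.exp u + (1 - p) := rfl
      nlinarith [sq_nonneg (p * Real.exp u - (1 - p))]
    linarith
  have hg10 : g₁ 0 = 0 := by
    simp [hg1_def, hs_def, Real.exp_zero]
  have hgmono : MonotoneOn g (Set.Ici 0) := by
    apply monotoneOn_of_deriv_nonneg (convex_Ici 0)
    · exact fun u _ => ((hgd u).continuousAt).continuousWithinAt
    · exact fun u _ => ((hgd u).differentiableAt).differentiableWithinAt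
    · intro u hu
      rw [(hgd u).deriv]
      rw [interior_Ici] at hu
      have := hg1mono (le_of_lt hu)
      rw [hg10] at this
      exact this
  have hg0 : g 0 = 0 := by
    have : s 0 = 1 := by simp [hs_def]
    simp [hg_def, this]
  have hgt : 0 ≤ g t := by
    have := hgmono (Set.self_mem_Ici) (Set.mem_Ici.2 ht) ht
    rw [hg0] at this; exact this
  have hlog : Real.log (s t) ≤ t * p + t ^ 2 / 8 := by
    simp only [hg_def] at hgt; linarith
  calc s t = Real.exp (Real.log (s t)) := (Real.exp_log (hs t)).symm
    _ ≤ Real.exp (t * p + t ^ 2 / 8) := Real.exp_le_exp.2 hlog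

lemma sum_prod_pow {X : Type*} [Fintype X] (n : ℕ) (f : X → ℝ) :
    ∑ x : Fin n → X, ∏ i, f (x i) = (∑ a, f a) ^ n := by
  calc ∑ x : Fin n → X, ∏ i, f (x i)
      = ∑ x ∈ Fintype.piFinset (fun _ : Fin n => Finset.univ), ∏ i, f (x i) := by
        rw [Fintype.piFinset_univ]
    _ = ∏ _i : Fin n, ∑ a, f a := (Finset.prod_univ_sum _ _).symm
    _ = (∑ a, f a) ^ n := by simp

lemma chernoff_subset {X : Type*} [Fintype X] [DecidableEq X] (n : ℕ) (hn : 1 ≤ n)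
    (P : X → ℝ) (hP : ∀ a, 0 ≤ P a) (hP1 : ∑ a, P a = 1)
    (δ : ℝ) (hδ : 0 < δ) (A : Finset X) :
    (∑ x : Fin n → X,
        if δ / 2 < ((Finset.univ.filter fun i => x i ∈ A).card : ℝ) / n - ∑ a ∈ A, P a then
          ∏ i, P (x i)
        else 0) ≤ Real.exp (-(n : ℝ) * δ ^ 2 / 2) := by
  set PA : ℝ := ∑ a ∈ A, P a with hPA_def
  have hPA0 : 0 ≤ PA := Finset.sum_nonneg fun a _ => hP a
  have hPA1 : PA ≤ 1 := by
    rw [← hP1]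
    exact Finset.sum_le_sum_of_subset_of_nonneg A.subset_univ fun a _ _ => hP a
  have hn' : (0 : ℝ) < n := by exact_mod_cast hn
  -- pointwise bound
  have hpt : ∀ x : Fin n → X,
      (if δ / 2 < ((Finset.univ.filter fun i => x i ∈ A).card : ℝ) / n - PA then
          ∏ i, P (x i) else 0)
      ≤ Real.exp (-(2 * δ) * (n * (PA + δ / 2))) *
          ∏ i, (Real.exp (2 * δ * (if x i ∈ A then (1:ℝ) else 0)) * P (x i)) := by
    intro x
    set c : ℝ := ((Finset.univ.filter fun i => x i ∈ A).card : ℝ) with hc_def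
    have hprod : (0:ℝ) ≤ ∏ i, P (x i) := Finset.prod_nonneg fun i _ => hP (x i)
    have hsplit : ∀ i : Fin n, Real.exp (2 * δ * (if x i ∈ A then (1:ℝ) else 0)) * P (x i)
        = Real.exp (2 * δ * (if x i ∈ A then (1:ℝ) else 0)) * P (x i) := fun _ => rfl
    have hfac : (∏ i, (Real.exp (2 * δ * (if x i ∈ A then (1:ℝ) else 0)) * P (x i)))
        = Real.exp (2 * δ * c) * ∏ i, P (x i) := by
      rw [Finset.prod_mul_distrib, ← Real.exp_sum]
      congr 2
      rw [← Finset.mul_sum]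
      congr 1
      rw [hc_def, Finset.card_filter]
      push_cast
      simp
    rw [hfac, ← mul_assoc, ← Real.exp_add]
    split_ifs with h
    · have hgt : n * (PA + δ / 2) < c := by
        have h2 : PA + δ / 2 < c / n := by linarith
        have := (lt_div_iff₀ hn').mp h2
        nlinarith
      have hexp : (0:ℝ) ≤ -(2 * δ) * (n * (PA + δ / 2)) + 2 * δ * c := by nlinarith
      have h1 : (1:ℝ) ≤ Real.exp (-(2 * δ) * (n * (PA + δ / 2)) + 2 * δ * c) := by
        have := Real.add_one_le_exp (-(2 * δ) * (n * (PA + δ / 2)) + 2 * δ * c)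
        linarith
      nlinarith
    · positivity
  calc (∑ x : Fin n → X,
        if δ / 2 < ((Finset.univ.filter fun i => x i ∈ A).card : ℝ) / n - PA then
          ∏ i, P (x i) else 0)
      ≤ ∑ x : Fin n → X, Real.exp (-(2 * δ) * (n * (PA + δ / 2))) *
          ∏ i, (Real.exp (2 * δ * (if x i ∈ A then (1:ℝ) else 0)) * P (x i)) :=
        Finset.sum_le_sum fun x _ => hpt x
    _ = Real.exp (-(2 * δ) * (n * (PA + δ / 2))) *
          (∑ a, Real.exp (2 * δ * (if a ∈ A then (1:ℝ) else 0)) * P a) ^ n := by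
        rw [← Finset.mul_sum]
        congr 1
        exact sum_prod_pow n (fun a => Real.exp (2 * δ * (if a ∈ A then (1:ℝ) else 0)) * P a)
    _ ≤ Real.exp (-(n : ℝ) * δ ^ 2 / 2) := by
        have hbase : (∑ a, Real.exp (2 * δ * (if a ∈ A then (1:ℝ) else 0)) * P a)
            = PA * Real.exp (2 * δ) + (1 - PA) := by
          have : ∀ a : X, Real.exp (2 * δ * (if a ∈ A then (1:ℝ) else 0)) * P a
              = if a ∈ A then Real.exp (2 * δ) * P a else P a := by
            intro a; split_ifs <;> simp
          rw [Finset.sum_congr rfl fun a _ => this a]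
          rw [Finset.sum_ite, ← Finset.mul_sum]
          have e1 : Finset.univ.filter (fun a => a ∈ A) = A := by ext a; simp
          have e2 : ∑ a ∈ Finset.univ.filter (fun a => ¬ a ∈ A), P a = 1 - PA := by
            have e3 : Finset.univ.filter (fun a => ¬ a ∈ A) = Finset.univ \ A := by
              ext a; simp
            rw [e3, Finset.sum_sdiff_eq_sub A.subset_univ, hP1]
          rw [e1, e2]; ring
        rw [hbase]
        have hble : PA * Real.exp (2 * δ) + (1 - PA) ≤ Real.exp (2 * δ * PA + δ ^ 2 / 2) := by
          have := bern_mgf hPA0 hPA1 (t := 2 * δ) (by linarith)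
          calc PA * Real.exp (2 * δ) + (1 - PA)
              ≤ Real.exp (2 * δ * PA + (2 * δ) ^ 2 / 8) := this
            _ = Real.exp (2 * δ * PA + δ ^ 2 / 2) := by ring_nf
        have hb0 : (0:ℝ) ≤ PA * Real.exp (2 * δ) + (1 - PA) := by
          nlinarith [Real.exp_pos (2 * δ)]
        calc Real.exp (-(2 * δ) * (n * (PA + δ / 2))) *
              (PA * Real.exp (2 * δ) + (1 - PA)) ^ n
            ≤ Real.exp (-(2 * δ) * (n * (PA + δ / 2))) *
              Real.exp (2 * δ * PA + δ ^ 2 / 2) ^ n := by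
              apply mul_le_mul_of_nonneg_left _ (Real.exp_pos _).le
              exact pow_le_pow_left₀ hb0 hble n
          _ = Real.exp (-(2 * δ) * (n * (PA + δ / 2)) + n * (2 * δ * PA + δ ^ 2 / 2)) := by
              rw [← Real.exp_nat_mul, ← Real.exp_add]
          _ = Real.exp (-(n : ℝ) * δ ^ 2 / 2) := by ring_nf

/-- Chernoff–Hoeffding bound for types: for x = (x_1,...,x_n) drawn i.i.d.
from the distribution P on a finite set X, the probability that the empirical
distribution λ_x deviates from P by more than δ in ℓ¹ distance is at most
2^{−n(δ²/(2 ln 2) − |X| log₂(n+1)/n)}. -/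
theorem empirical_distribution_deviation_bound
    {X : Type*} [Fintype X] [DecidableEq X] (n : ℕ) (hn : 1 ≤ n)
    (P : X → ℝ) (hP : ∀ a, 0 ≤ P a) (hP1 : ∑ a, P a = 1)
    (δ : ℝ) (hδ : 0 < δ) :
    (∑ x : Fin n → X,
        if δ < ∑ a, |((Finset.univ.filter fun i => x i = a).card : ℝ) / n - P a| then
          ∏ i, P (x i)
        else 0) ≤
      (2 : ℝ) ^ (-(n : ℝ) *
        (δ ^ 2 / (2 * Real.log 2) - (Fintype.card X : ℝ) * Real.logb 2 (n + 1) / n)) := by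
  have hn' : (0 : ℝ) < n := by exact_mod_cast hn
  -- pointwise union bound
  have key : ∀ x : Fin n → X,
      (if δ < ∑ a, |((Finset.univ.filter fun i => x i = a).card : ℝ) / n - P a| then
          ∏ i, P (x i) else 0)
      ≤ ∑ A ∈ (Finset.univ : Finset X).powerset,
          (if δ / 2 < ((Finset.univ.filter fun i => x i ∈ A).card : ℝ) / n - ∑ a ∈ A, P a then
            ∏ i, P (x i) else 0) := by
    intro x
    have hterm_nonneg : ∀ A ∈ (Finset.univ : Finset X).powerset,
        (0:ℝ) ≤ (if δ / 2 < ((Finset.univ.filter fun i => x i ∈ A).card : ℝ) / n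
            - ∑ a ∈ A, P a then ∏ i, P (x i) else 0) := by
      intro A _
      split_ifs
      · exact Finset.prod_nonneg fun i _ => hP (x i)
      · exact le_refl 0
    split_ifs with h
    · -- the witness set
      set d : X → ℝ := fun a => ((Finset.univ.filter fun i => x i = a).card : ℝ) / n - P a
        with hd_def
      set A₀ : Finset X := Finset.univ.filter (fun a => 0 < d a) with hA0_def
      -- count identities
      have hcnt_sum : ∑ a : X, ((Finset.univ.filter fun i => x i = a).card : ℝ) = n := by
        simp only [Finset.card_filter]
        push_cast
        rw [Finset.sum_comm]
        simp
      have hcntA : ∀ B : Finset X,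
          ∑ a ∈ B, ((Finset.univ.filter fun i => x i = a).card : ℝ)
            = ((Finset.univ.filter fun i => x i ∈ B).card : ℝ) := by
        intro B
        simp only [Finset.card_filter]
        push_cast
        rw [Finset.sum_comm]
        congr 1
        ext i
        simp [Finset.sum_ite_eq' B (x i) (fun _ => (1:ℝ))]
      have hd0 : ∑ a, d a = 0 := by
        simp only [hd_def, Finset.sum_sub_distrib, ← Finset.sum_div, hcnt_sum, hP1]
        field_simp; try simp
      have habs : ∑ a, |d a| = 2 * ∑ a ∈ A₀, d a := by
        have hsplit := Finset.sum_filter_add_sum_filter_not Finset.univ (fun a => 0 < d a)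
          (fun a => |d a|)
        have hsplit2 := Finset.sum_filter_add_sum_filter_not Finset.univ (fun a => 0 < d a)
          (fun a => d a)
        have e1 : ∑ a ∈ Finset.univ.filter (fun a => 0 < d a), |d a|
            = ∑ a ∈ A₀, d a := by
          apply Finset.sum_congr rfl
          intro a ha
          exact abs_of_pos (Finset.mem_filter.mp ha).2
        have e2 : ∑ a ∈ Finset.univ.filter (fun a => ¬ 0 < d a), |d a|
            = -∑ a ∈ Finset.univ.filter (fun a => ¬ 0 < d a), d a := by
          rw [← Finset.sum_neg_distrib]
          apply Finset.sum_congr rfl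
          intro a ha
          exact abs_of_nonpos (le_of_not_gt (Finset.mem_filter.mp ha).2)
        rw [← hsplit, e1, e2]
        rw [← hsplit2] at hd0
        linarith
      have hwit : δ / 2 < ((Finset.univ.filter fun i => x i ∈ A₀).card : ℝ) / n
          - ∑ a ∈ A₀, P a := by
        have : ∑ a ∈ A₀, d a
            = ((Finset.univ.filter fun i => x i ∈ A₀).card : ℝ) / n - ∑ a ∈ A₀, P a := by
          simp only [hd_def, Finset.sum_sub_distrib, ← Finset.sum_div, hcntA A₀]
        rw [← this]
        rw [habs] at h
        linarith
      calc (∏ i, P (x i))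
          = (if δ / 2 < ((Finset.univ.filter fun i => x i ∈ A₀).card : ℝ) / n
              - ∑ a ∈ A₀, P a then ∏ i, P (x i) else 0) := (if_pos hwit).symm
        _ ≤ _ := Finset.single_le_sum hterm_nonneg
              (Finset.mem_powerset.mpr A₀.subset_univ)
    · exact Finset.sum_nonneg hterm_nonneg
  calc (∑ x : Fin n → X,
        if δ < ∑ a, |((Finset.univ.filter fun i => x i = a).card : ℝ) / n - P a| then
          ∏ i, P (x i) else 0)
      ≤ ∑ x : Fin n → X, ∑ A ∈ (Finset.univ : Finset X).powerset,
          (if δ / 2 < ((Finset.univ.filter fun i => x i ∈ A).card : ℝ) / n - ∑ a ∈ A, P a then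
            ∏ i, P (x i) else 0) := Finset.sum_le_sum fun x _ => key x
    _ = ∑ A ∈ (Finset.univ : Finset X).powerset, ∑ x : Fin n → X,
          (if δ / 2 < ((Finset.univ.filter fun i => x i ∈ A).card : ℝ) / n - ∑ a ∈ A, P a then
            ∏ i, P (x i) else 0) := Finset.sum_comm
    _ ≤ ∑ _A ∈ (Finset.univ : Finset X).powerset, Real.exp (-(n : ℝ) * δ ^ 2 / 2) :=
        Finset.sum_le_sum fun A _ => chernoff_subset n hn P hP hP1 δ hδ A
    _ = 2 ^ (Fintype.card X) * Real.exp (-(n : ℝ) * δ ^ 2 / 2) := by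
        rw [Finset.sum_const, Finset.card_powerset, Finset.card_univ]
        simp [nsmul_eq_mul]
    _ ≤ (2 : ℝ) ^ (-(n : ℝ) *
        (δ ^ 2 / (2 * Real.log 2) - (Fintype.card X : ℝ) * Real.logb 2 (n + 1) / n)) := by
        have hlog2 : (0:ℝ) < Real.log 2 := Real.log_pos (by norm_num)
        have hexp_eq : -(n : ℝ) *
            (δ ^ 2 / (2 * Real.log 2) - (Fintype.card X : ℝ) * Real.logb 2 (n + 1) / n)
            = -(n : ℝ) * δ ^ 2 / (2 * Real.log 2)
              + (Fintype.card X : ℝ) * Real.logb 2 (n + 1) := by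
          field_simp
          ring
        rw [hexp_eq, Real.rpow_add (by norm_num : (0:ℝ) < 2)]
        have h1 : (2:ℝ) ^ (-(n : ℝ) * δ ^ 2 / (2 * Real.log 2))
            = Real.exp (-(n : ℝ) * δ ^ 2 / 2) := by
          rw [Real.rpow_def_of_pos (by norm_num : (0:ℝ) < 2)]
          congr 1
          field_simp
          try ring
        have h2 : (2:ℝ) ^ ((Fintype.card X : ℝ) * Real.logb 2 (n + 1))
            = ((n:ℝ) + 1) ^ (Fintype.card X) := by
          rw [mul_comm, Real.rpow_mul (by norm_num : (0:ℝ) ≤ 2),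
            Real.rpow_logb (by norm_num) (by norm_num) (by positivity),
            Real.rpow_natCast]
        rw [h1, h2]
        rw [mul_comm]
        apply mul_le_mul_of_nonneg_left _ (Real.exp_pos _).le
        apply pow_le_pow_left₀ (by norm_num)
        have h3 : (1:ℝ) ≤ n := by exact_mod_cast hn
        linarith
end
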